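/- Let T > 0, κ ≥ 0, M ≥ 0. Let K : [0,T] → ℝ be continuously differentiable with |K(t)| ≤ κ and |K'(t)| ≤ κ on [0,T], let g : [0,T] → ℝ be continuous with |g(t)| ≤ M on [0,T], and let φ : [0,T] → ℝ be three times continuously differentiable satisfying φ''' + 4·K·φ' + 2·K'·φ = −2·g on [0,T] with φ(0) = φ'(0) = φ''(0) = 0. Then there exists a constant C > 0, depending only on T and κ (and not on M, g, or φ), such that |φ'(t)| ≤ C·t·M and |φ''(t)| ≤ C·t·M for all t ∈ [0,T]. -/

import Mathlib

open Set

private lemma exp_sub_one_le (y : ℝ) (hy : 0 ≤ y) : Real.exp y - 1 ≤ y * Real.exp y := by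
  have h := Real.add_one_le_exp (-y)
  rw [Real.exp_neg] at h
  have h2 := mul_le_mul_of_nonneg_right h (Real.exp_pos y).le
  rw [inv_mul_cancel₀ (Real.exp_pos y).ne'] at h2
  nlinarith

/-- Bounds on the first and second derivatives of the solution, with triple zero initial
data, of the third-order linear ODE `φ''' + 4Kφ' + 2K'φ = −2g`: there is a constant
`C > 0` depending only on `T` and `κ` such that `|φ'(t)| ≤ C·t·M` and
`|φ''(t)| ≤ C·t·M` on `[0,T]`. -/
theorem deriv_phi_bound_of_third_order_ode
    (T κ : ℝ) (hT : 0 < T) (hκ : 0 ≤ κ) :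
    ∃ C : ℝ, 0 < C ∧
      ∀ (M : ℝ), 0 ≤ M →
      ∀ (K g φ : ℝ → ℝ),
        ContDiff ℝ 1 K →
        (∀ t ∈ Icc (0 : ℝ) T, |K t| ≤ κ) →
        (∀ t ∈ Icc (0 : ℝ) T, |deriv K t| ≤ κ) →
        ContinuousOn g (Icc 0 T) →
        (∀ t ∈ Icc (0 : ℝ) T, |g t| ≤ M) →
        ContDiff ℝ 3 φ →
        (∀ t ∈ Icc (0 : ℝ) T,
          deriv (deriv (deriv φ)) t + 4 * K t * deriv φ t + 2 * deriv K t * φ t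
            = -2 * g t) →
        φ 0 = 0 → deriv φ 0 = 0 → deriv (deriv φ) 0 = 0 →
        ∀ t ∈ Icc (0 : ℝ) T,
          |deriv φ t| ≤ C * t * M ∧ |deriv (deriv φ) t| ≤ C * t * M := by
  set L : ℝ := 1 + 6 * κ with hLdef
  have hL0 : 0 < L := by positivity
  have hL1 : (1 : ℝ) ≤ L := by nlinarith
  refine ⟨2 * Real.exp (L * T), by positivity, ?_⟩
  intro M hM K g φ hK hKb hK'b hg hgb hφ hode h0 h0' h0''
  have hφ1 : ContDiff ℝ 2 (deriv φ) := by
    have := (contDiff_succ_iff_deriv.mp (show ContDiff ℝ (2 + 1) φ from hφ)).2.2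
    exact this
  have hφ2 : ContDiff ℝ 1 (deriv (deriv φ)) := by
    have := (contDiff_succ_iff_deriv.mp (show ContDiff ℝ (1 + 1) (deriv φ) from hφ1)).2.2
    exact this
  set v : ℝ → ℝ × ℝ × ℝ := fun t => (φ t, deriv φ t, deriv (deriv φ) t) with hv
  set w : ℝ → ℝ × ℝ × ℝ :=
    fun t => (deriv φ t, deriv (deriv φ) t, deriv (deriv (deriv φ)) t) with hw
  have hd : ∀ t : ℝ, HasDerivAt v (w t) t := by
    intro t
    exact HasDerivAt.prodMk ((hφ.differentiable (by norm_num)).differentiableAt.hasDerivAt)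
      (HasDerivAt.prodMk (((hφ1.differentiable (by norm_num)).differentiableAt.hasDerivAt))
        ((hφ2.differentiable (by norm_num)).differentiableAt.hasDerivAt))
  have hnv : ∀ x : ℝ, ‖v x‖ = max |φ x| (max |deriv φ x| |deriv (deriv φ) x|) := by
    intro x; simp [hv, Prod.norm_def, Real.norm_eq_abs]
  have key : ∀ t ∈ Icc (0 : ℝ) T, ‖v t‖ ≤ gronwallBound 0 L (2 * M) (t - 0) := by
    apply norm_le_gronwallBound_of_norm_deriv_right_le
      (fun t _ => (hd t).continuousAt.continuousWithinAt)
      (fun t _ => (hd t).hasDerivWithinAt)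
    · simp [hv, h0, h0', h0'', Prod.norm_def]
    · intro x hx
      have hx' : x ∈ Icc (0 : ℝ) T := Ico_subset_Icc_self hx
      have hvnn : 0 ≤ ‖v x‖ := norm_nonneg _
      have h1 : |φ x| ≤ ‖v x‖ := by rw [hnv]; exact le_max_left _ _
      have h2 : |deriv φ x| ≤ ‖v x‖ := by
        rw [hnv]; exact le_trans (le_max_left _ _) (le_max_right _ _)
      have h3 : |deriv (deriv φ) x| ≤ ‖v x‖ := by
        rw [hnv]; exact le_trans (le_max_right _ _) (le_max_right _ _)
      have hKx := hKb x hx'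
      have hK'x := hK'b x hx'
      have hgx := hgb x hx'
      have h4 : deriv (deriv (deriv φ)) x
          = (-2 * g x) + (-(4 * K x * deriv φ x)) + (-(2 * deriv K x * φ x)) := by
        have := hode x hx'; linarith
      have h5 : |deriv (deriv (deriv φ)) x| ≤ L * ‖v x‖ + 2 * M := by
        rw [h4]
        have b1 : |(-2 : ℝ) * g x| ≤ 2 * M := by
          rw [abs_mul]
          have : |(-2 : ℝ)| = 2 := by norm_num
          rw [this]; linarith
        have b2 : |4 * K x * deriv φ x| ≤ 4 * κ * ‖v x‖ := by
          rw [abs_mul, abs_mul]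
          have : |(4 : ℝ)| = 4 := by norm_num
          rw [this]
          have := abs_nonneg (K x)
          have := abs_nonneg (deriv φ x)
          nlinarith
        have b3 : |2 * deriv K x * φ x| ≤ 2 * κ * ‖v x‖ := by
          rw [abs_mul, abs_mul]
          have : |(2 : ℝ)| = 2 := by norm_num
          rw [this]
          have := abs_nonneg (deriv K x)
          have := abs_nonneg (φ x)
          nlinarith
        calc |(-2 * g x) + (-(4 * K x * deriv φ x)) + (-(2 * deriv K x * φ x))|
            ≤ |(-2 * g x) + (-(4 * K x * deriv φ x))| + |-(2 * deriv K x * φ x)| :=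
              abs_add_le _ _
          _ ≤ |(-2) * g x| + |-(4 * K x * deriv φ x)| + |-(2 * deriv K x * φ x)| := by
              have := abs_add_le (-2 * g x) (-(4 * K x * deriv φ x)); linarith
          _ = |(-2) * g x| + |4 * K x * deriv φ x| + |2 * deriv K x * φ x| := by
              rw [abs_neg, abs_neg]
          _ ≤ 2 * M + 4 * κ * ‖v x‖ + 2 * κ * ‖v x‖ := by linarith
          _ ≤ L * ‖v x‖ + 2 * M := by nlinarith
      have hnw : ‖w x‖
          = max |deriv φ x| (max |deriv (deriv φ) x| |deriv (deriv (deriv φ)) x|) := by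
        simp [hw, Prod.norm_def, Real.norm_eq_abs]
      rw [hnw]
      apply max_le
      · nlinarith
      apply max_le
      · nlinarith
      · exact h5
  intro t ht
  obtain ⟨ht0, htT⟩ := ht
  have hkey := key t ⟨ht0, htT⟩
  rw [sub_zero, gronwallBound_of_K_ne_0 hL0.ne'] at hkey
  simp only [zero_mul, zero_add] at hkey
  have e1 : Real.exp (L * t) - 1 ≤ L * t * Real.exp (L * t) :=
    exp_sub_one_le (L * t) (by positivity)
  have e2 : Real.exp (L * t) ≤ Real.exp (L * T) :=
    Real.exp_le_exp.mpr (by nlinarith)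
  have e3 : Real.exp (L * t) - 1 ≤ L * t * Real.exp (L * T) := by
    nlinarith [mul_nonneg hL0.le ht0]
  have e4 : 2 * M / L * (Real.exp (L * t) - 1) ≤ 2 * Real.exp (L * T) * t * M := by
    have := mul_le_mul_of_nonneg_left e3 (by positivity : (0:ℝ) ≤ 2 * M / L)
    calc 2 * M / L * (Real.exp (L * t) - 1)
        ≤ 2 * M / L * (L * t * Real.exp (L * T)) := this
      _ = 2 * Real.exp (L * T) * t * M := by field_simp
  have hb : ‖v t‖ ≤ 2 * Real.exp (L * T) * t * M := le_trans hkey e4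
  constructor
  · calc |deriv φ t| ≤ ‖v t‖ := by
          rw [hnv]; exact le_trans (le_max_left _ _) (le_max_right _ _)
      _ ≤ _ := hb
  · calc |deriv (deriv φ) t| ≤ ‖v t‖ := by
          rw [hnv]; exact le_trans (le_max_right _ _) (le_max_right _ _)
      _ ≤ _ := hb
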